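/- arXiv:1704.03484 — 2 statements merged into one kernel-verified Lean document; each statement's English description precedes it below -/
import Mathlib

section
/- Let d ≥ 1 and let G be a finite simple graph on n ≥ d vertices with vertex set V. Then for every map φ : V → ℝ^d, the rank of the rigidity matrix satisfies rank Rig(G, φ) ≤ d·n − (d+1 choose 2). -/
open scoped Classical in
/-- The row of the rigidity matrix corresponding to a potential edge of the graph:
for the edge `{u, v}`, the row contains the vector `φ u - φ v` in the block of columns
of `u`, the vector `φ v - φ u` in the block of columns of `v`, and zeros elsewhere. -/
noncomputable def rigidityRow {V : Type*} (d : ℕ) (φ : V → EuclideanSpace ℝ (Fin d)) :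
    Sym2 V → (V × Fin d → ℝ) :=
  Sym2.lift ⟨fun u v c =>
      if c.1 = u then φ u c.2 - φ v c.2
      else if c.1 = v then φ v c.2 - φ u c.2 else 0, by
    intro u v
    funext c
    by_cases h1 : c.1 = u <;> by_cases h2 : c.1 = v <;> simp_all⟩

/-- The rank of the rigidity matrix `Rig(G, φ)`, computed as the dimension of its row
space, i.e. of the span of the rows corresponding to the edges of `G`. -/
noncomputable def rigidityRank {V : Type*} (d : ℕ) (G : SimpleGraph V)
    (φ : V → EuclideanSpace ℝ (Fin d)) : ℕ :=
  Module.finrank ℝ (Submodule.span ℝ (rigidityRow d φ '' G.edgeSet))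

/-- A finite simple graph `G` on `n` vertices is generically `d`-rigid if some
`d`-embedding `φ` satisfies `rank Rig(G, φ) = d * n - (d + 1).choose 2`. -/
def GenericallyRigid {V : Type*} (d : ℕ) (G : SimpleGraph V) : Prop :=
  ∃ φ : V → EuclideanSpace ℝ (Fin d),
    rigidityRank d G φ = d * Nat.card V - (d + 1).choose 2

section Aux

variable {V : Type*} [Fintype V] {d : ℕ}

open RealInnerProductSpace Finset Module Submodule

private abbrev Fsp (d : ℕ) := EuclideanSpace ℝ (Fin d)
private abbrev Esp (V : Type*) (d : ℕ) := EuclideanSpace ℝ (V × Fin d)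

/-- block extraction as a linear map -/
private noncomputable def blockL (V : Type*) (d : ℕ) (v : V) :
    Esp V d →ₗ[ℝ] Fsp d where
  toFun x := WithLp.toLp 2 (fun c => x (v, c))
  map_add' x y := rfl
  map_smul' r x := rfl

@[simp] private lemma blockL_apply (v : V) (x : Esp V d) (c : Fin d) :
    blockL V d v x c = x (v, c) := rfl

/-- translation motion -/
private noncomputable def transMotion (V : Type*) (d : ℕ) (y : Fsp d) : Esp V d :=
  WithLp.toLp 2 (fun p => y p.2)

/-- rotation motion -/
private noncomputable def rotMotion (ψ : V → Fsp d) (a b : Fsp d) : Esp V d :=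
  WithLp.toLp 2 (fun p => ⟪ψ p.1, a⟫ * b p.2 - ⟪ψ p.1, b⟫ * a p.2)

/-- the skew map x ↦ ⟪a,x⟫ • b - ⟪b,x⟫ • a -/
private noncomputable def rotMap (a b : Fsp d) : Fsp d →ₗ[ℝ] Fsp d :=
  ((innerSL ℝ a).toLinearMap).smulRight b - ((innerSL ℝ b).toLinearMap).smulRight a

private lemma rotMap_apply (a b x : Fsp d) :
    rotMap a b x = ⟪a, x⟫ • b - ⟪b, x⟫ • a := rfl

private lemma blockL_transMotion (v : V) (y : Fsp d) :
    blockL V d v (transMotion V d y) = y := rfl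

private lemma blockL_rotMotion (v : V) (ψ : V → Fsp d) (a b : Fsp d) :
    blockL V d v (rotMotion ψ a b) = rotMap a b (ψ v) := by
  ext c
  show (rotMotion ψ a b) (v, c) = _
  simp [rotMotion, rotMap_apply, real_inner_comm, PiLp.sub_apply, PiLp.smul_apply, smul_eq_mul]

/-- index of a "rotation": pair i < j in Fin k, encoded as Σ j, Fin j -/
private def loIdx {k : ℕ} (σ : Σ j : Fin k, Fin j.1) : Fin k := ⟨σ.2.1, σ.2.2.trans σ.1.2⟩
private def hiIdx {k : ℕ} (σ : Σ j : Fin k, Fin j.1) : Fin k := σ.1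

private lemma loIdx_ne_hiIdx {k : ℕ} (σ : Σ j : Fin k, Fin j.1) : loIdx σ ≠ hiIdx σ := by
  have : (loIdx σ : ℕ) < (hiIdx σ : ℕ) := σ.2.2
  exact Fin.ne_of_lt this

private lemma motions_linearIndependent {k : ℕ}
    (ψ : V → Fsp d) (u0 : V) (hψ0 : ψ u0 = 0)
    (e : Fin k → Fsp d) (horth : Orthonormal ℝ e)
    (hspan : ∀ i, e i ∈ Submodule.span ℝ (Set.range ψ)) :
    LinearIndependent ℝ (Sum.elim (fun i => transMotion V d (e i))
      (fun σ : Σ j : Fin k, Fin j.1 => rotMotion ψ (e (loIdx σ)) (e (hiIdx σ)))) := by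
  have hite := orthonormal_iff_ite.mp horth
  rw [Fintype.linearIndependent_iff]
  intro g hg
  -- block decomposition
  have hblock : ∀ v : V, (∑ i : Fin k, g (Sum.inl i) • e i)
      + (∑ σ : Σ j : Fin k, Fin j.1,
          g (Sum.inr σ) • rotMap (e (loIdx σ)) (e (hiIdx σ)) (ψ v)) = 0 := by
    intro v
    have := congrArg (blockL V d v) hg
    rw [map_sum, map_zero] at this
    simp only [map_smul, Fintype.sum_sum_type, Sum.elim_inl, Sum.elim_inr,
      blockL_transMotion, blockL_rotMotion] at this
    exact this
  -- translations vanish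
  have htr : ∀ i : Fin k, g (Sum.inl i) = 0 := by
    have h0 := hblock u0
    rw [hψ0] at h0
    simp only [map_zero, smul_zero, Finset.sum_const_zero, add_zero] at h0
    exact fun i => Fintype.linearIndependent_iff.mp horth.linearIndependent _ h0 i
  -- the skew map vanishes on the span of ψ
  set SS : Fsp d →ₗ[ℝ] Fsp d :=
    ∑ σ : Σ j : Fin k, Fin j.1, g (Sum.inr σ) • rotMap (e (loIdx σ)) (e (hiIdx σ)) with hSS
  have hSSrange : ∀ v : V, SS (ψ v) = 0 := by
    intro v
    have h0 := hblock v
    simp only [htr, zero_smul, Finset.sum_const_zero, zero_add] at h0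
    rw [hSS, LinearMap.sum_apply]
    simpa only [LinearMap.smul_apply] using h0
  have hker : Submodule.span ℝ (Set.range ψ) ≤ LinearMap.ker SS := by
    rw [Submodule.span_le]
    rintro x ⟨v, rfl⟩
    exact LinearMap.mem_ker.mpr (hSSrange v)
  have hSe : ∀ i : Fin k, SS (e i) = 0 := fun i => LinearMap.mem_ker.mp (hker (hspan i))
  -- extract rotation coefficients
  intro i
  cases i with
  | inl i => exact htr i
  | inr σ0 =>
    have h0 : ⟪SS (e (loIdx σ0)), e (hiIdx σ0)⟫ = 0 := by rw [hSe]; exact inner_zero_left _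
    rw [hSS, LinearMap.sum_apply, sum_inner] at h0
    have h1 : loIdx σ0 ≠ hiIdx σ0 := loIdx_ne_hiIdx σ0
    rw [← h0]
    symm
    rw [Finset.sum_eq_single σ0]
    · simp only [LinearMap.smul_apply, real_inner_smul_left, rotMap_apply,
        inner_sub_left, hite]
      simp [if_neg h1, if_neg (Ne.symm h1)]
    · intro σ _ hσ
      have hB : ¬ (hiIdx σ = loIdx σ0 ∧ loIdx σ = hiIdx σ0) := by
        rintro ⟨ha, hb⟩
        have l1 : (loIdx σ : ℕ) < (hiIdx σ : ℕ) := σ.2.2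
        have l2 : (loIdx σ0 : ℕ) < (hiIdx σ0 : ℕ) := σ0.2.2
        rw [ha, hb] at l1
        omega
      have hA : ¬ (loIdx σ = loIdx σ0 ∧ hiIdx σ = hiIdx σ0) := by
        rintro ⟨ha, hb⟩
        apply hσ
        obtain ⟨j, i⟩ := σ
        obtain ⟨j0, i0⟩ := σ0
        have hj : j = j0 := hb
        subst hj
        have hv := congrArg Fin.val ha
        simp only [loIdx] at hv
        exact congrArg (Sigma.mk j) (Fin.ext hv)
      simp only [LinearMap.smul_apply, real_inner_smul_left, rotMap_apply,
        inner_sub_left, hite]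
      split_ifs <;> first | ring1 | tauto
    · intro h
      exact absurd (Finset.mem_univ σ0) h

/-- packing a family of vectors of a submodule into one big vector -/
private noncomputable def packL (V : Type*) (d : ℕ) (W' : Submodule ℝ (Fsp d)) :
    (V → W') →ₗ[ℝ] Esp V d where
  toFun f := WithLp.toLp 2 (fun p => (f p.1 : Fsp d) p.2)
  map_add' f g := rfl
  map_smul' r f := rfl

@[simp] private lemma packL_apply (W' : Submodule ℝ (Fsp d)) (f : V → W') (p : V × Fin d) :
    packL V d W' f p = (f p.1 : Fsp d) p.2 := rfl

@[simp] private lemma blockL_packL (W' : Submodule ℝ (Fsp d)) (f : V → W') (v : V) :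
    blockL V d v (packL V d W' f) = (f v : Fsp d) := rfl

/-- the inner product of any vector with a row of the rigidity matrix -/
private lemma inner_row (φ : V → Fsp d) (x : Esp V d) {u v : V} (huv : u ≠ v) :
    ⟪x, (WithLp.toLp 2 (rigidityRow d φ s(u, v)) : Esp V d)⟫ =
      ∑ c : Fin d, (x (u, c) - x (v, c)) * (φ u c - φ v c) := by
  classical
  have hrow : ∀ p : V × Fin d, rigidityRow d φ s(u, v) p =
      if p.1 = u then φ u p.2 - φ v p.2
      else if p.1 = v then φ v p.2 - φ u p.2 else 0 := by
    intro p
    rw [rigidityRow, Sym2.lift_mk]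
  have : ⟪x, (WithLp.toLp 2 (rigidityRow d φ s(u, v)) : Esp V d)⟫
      = ∑ p : V × Fin d, x p * rigidityRow d φ s(u, v) p := by
    rw [PiLp.inner_apply]
    exact Finset.sum_congr rfl fun p _ => by
      simp only [RCLike.inner_apply, conj_trivial, WithLp.ofLp_toLp]; ring
  rw [this]
  rw [Fintype.sum_prod_type]
  rw [← Finset.sum_subset (Finset.subset_univ ({u, v} : Finset V))]
  · rw [Finset.sum_pair huv]
    have hu : ∀ c : Fin d, rigidityRow d φ s(u, v) (u, c) = φ u c - φ v c := by
      intro c; rw [hrow]; simp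
    have hv : ∀ c : Fin d, rigidityRow d φ s(u, v) (v, c) = φ v c - φ u c := by
      intro c; rw [hrow]; simp [huv, Ne.symm huv]
    rw [← Finset.sum_add_distrib]
    exact Finset.sum_congr rfl fun c _ => by rw [hu, hv]; ring
  · intro w _ hw
    simp only [Finset.mem_insert, Finset.mem_singleton, not_or] at hw
    apply Finset.sum_eq_zero
    intro c _
    rw [hrow]
    simp [hw.1, hw.2]

private lemma inner_transMotion_row (φ : V → Fsp d) (y : Fsp d) {u v : V} (huv : u ≠ v) :
    ⟪(transMotion V d y : Esp V d), (WithLp.toLp 2 (rigidityRow d φ s(u, v)) : Esp V d)⟫ = 0 := by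
  rw [inner_row φ _ huv]
  have : ∀ c : Fin d, (transMotion V d y : Esp V d) (u, c) = y c := fun _ => rfl
  have hv : ∀ c : Fin d, (transMotion V d y : Esp V d) (v, c) = y c := fun _ => rfl
  apply Finset.sum_eq_zero
  intro c _
  rw [this, hv]
  ring

private lemma inner_rotMotion_row (φ : V → Fsp d) (u0 : V) (a b : Fsp d) {u v : V}
    (huv : u ≠ v) :
    ⟪(rotMotion (fun w => φ w - φ u0) a b : Esp V d),
      (WithLp.toLp 2 (rigidityRow d φ s(u, v)) : Esp V d)⟫ = 0 := by
  set ψ : V → Fsp d := fun w => φ w - φ u0 with hψ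
  rw [inner_row φ _ huv]
  have hx : ∀ (w : V) (c : Fin d),
      (rotMotion ψ a b : Esp V d) (w, c) = ⟪ψ w, a⟫ * b c - ⟪ψ w, b⟫ * a c := fun _ _ => rfl
  have hz : ∀ c : Fin d, φ u c - φ v c = (ψ u - ψ v : Fsp d) c := by
    intro c
    simp [hψ, PiLp.sub_apply]
  have hsum : ∀ y : Fsp d, ∑ c : Fin d, y c * (ψ u - ψ v : Fsp d) c = ⟪ψ u, y⟫ - ⟪ψ v, y⟫ := by
    intro y
    have h1 : ∑ c : Fin d, y c * (ψ u - ψ v : Fsp d) c = ⟪y, ψ u - ψ v⟫ := by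
      rw [PiLp.inner_apply]
      exact Finset.sum_congr rfl fun c _ => by rw [RCLike.inner_apply, conj_trivial]; ring
    rw [h1, inner_sub_right, real_inner_comm y (ψ u), real_inner_comm y (ψ v)]
  have expand : ∀ c : Fin d,
      ((rotMotion ψ a b : Esp V d) (u, c) - (rotMotion ψ a b : Esp V d) (v, c))
          * (φ u c - φ v c)
        = ⟪ψ u, a⟫ * (b c * (ψ u - ψ v : Fsp d) c) - ⟪ψ u, b⟫ * (a c * (ψ u - ψ v : Fsp d) c)
          - ⟪ψ v, a⟫ * (b c * (ψ u - ψ v : Fsp d) c)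
          + ⟪ψ v, b⟫ * (a c * (ψ u - ψ v : Fsp d) c) := by
    intro c
    rw [hx, hx, hz]
    ring
  rw [Finset.sum_congr rfl fun c _ => expand c]
  rw [Finset.sum_add_distrib, Finset.sum_sub_distrib, Finset.sum_sub_distrib,
    ← Finset.mul_sum, ← Finset.mul_sum, ← Finset.mul_sum, ← Finset.mul_sum, hsum a, hsum b]
  ring

private lemma inner_packL_row (φ : V → Fsp d) (u0 : V) (W' : Submodule ℝ (Fsp d))
    (hW' : ∀ w : V, φ w - φ u0 ∈ W') (f : V → ↥(W'ᗮ)) {u v : V} (huv : u ≠ v) :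
    ⟪packL V d W'ᗮ f, (WithLp.toLp 2 (rigidityRow d φ s(u, v)) : Esp V d)⟫ = 0 := by
  rw [inner_row φ _ huv]
  have h1 : ∑ c : Fin d, (packL V d W'ᗮ f (u, c) - packL V d W'ᗮ f (v, c)) * (φ u c - φ v c)
      = ⟪((f u : Fsp d) - (f v : Fsp d)), φ u - φ v⟫ := by
    rw [PiLp.inner_apply]
    refine Finset.sum_congr rfl fun c _ => ?_
    rw [RCLike.inner_apply, conj_trivial, packL_apply, packL_apply, PiLp.sub_apply,
      PiLp.sub_apply]
    ring
  rw [h1]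
  have hy : ((f u : Fsp d) - (f v : Fsp d)) ∈ W'ᗮ := sub_mem (f u).2 (f v).2
  have hz : φ u - φ v ∈ W' := by
    have h2 : φ u - φ v = (φ u - φ u0) - (φ v - φ u0) := by abel
    rw [h2]
    exact sub_mem (hW' u) (hW' v)
  rw [real_inner_comm]
  exact hy _ hz

private lemma choose_aux (n k : ℕ) :
    ∀ j : ℕ, k + j ≤ n → (k + j + 1).choose 2 + n * k ≤ (k + 1).choose 2 + n * (k + j) := by
  intro j
  induction j with
  | zero => intro _; simp
  | succ j ih =>
    intro h
    have h1 := ih (by omega)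
    have e1 : k + (j + 1) + 1 = (k + j + 1) + 1 := by omega
    have h2 : (k + (j + 1) + 1).choose 2 = (k + j + 1).choose 2 + (k + j + 1) := by
      rw [e1, show (2:ℕ) = 1 + 1 from rfl, Nat.choose_succ_succ', Nat.choose_one_right]
      omega
    have h3 : n * (k + (j + 1)) = n * (k + j) + n := by ring
    omega

end Aux

open RealInnerProductSpace Module in
/-- For `d ≥ 1` and a finite simple graph `G` on `n ≥ d` vertices, every `d`-embedding
`φ` satisfies `rank Rig(G, φ) ≤ d * n - (d + 1).choose 2`. -/
theorem rigidityRank_le {V : Type*} [Fintype V] (d : ℕ) (hd : 1 ≤ d) (G : SimpleGraph V)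
    (hn : d ≤ Fintype.card V) (φ : V → EuclideanSpace ℝ (Fin d)) :
    rigidityRank d G φ ≤ d * Fintype.card V - (d + 1).choose 2 := by
  classical
  obtain ⟨u0⟩ : Nonempty V := Fintype.card_pos_iff.mp (lt_of_lt_of_le hd hn)
  set n := Fintype.card V with hncard
  set ψ : V → Fsp d := fun v => φ v - φ u0 with hψdef
  set W : Submodule ℝ (Fsp d) := Submodule.span ℝ (Set.range ψ) with hWdef
  set k := Module.finrank ℝ W with hkdef
  have hkd : k ≤ d := by
    have h := Submodule.finrank_le W
    rwa [finrank_euclideanSpace, Fintype.card_fin] at h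
  -- an orthonormal basis of W, viewed in the ambient space
  set e : Fin k → Fsp d := fun i => ((stdOrthonormalBasis ℝ W) i : Fsp d) with hedef
  have horth : Orthonormal ℝ e := by
    rw [orthonormal_iff_ite]
    intro i j
    rw [hedef]
    rw [← Submodule.coe_inner]
    exact orthonormal_iff_ite.mp (stdOrthonormalBasis ℝ W).orthonormal i j
  have heW : ∀ i, e i ∈ W := fun i => ((stdOrthonormalBasis ℝ W) i).2
  have hψ0 : ψ u0 = 0 := by simp [hψdef]
  have hψW : ∀ v, ψ v ∈ W := fun v => Submodule.subset_span ⟨v, rfl⟩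
  -- the motions
  set mot : (Fin k ⊕ (Σ j : Fin k, Fin j.1)) → Esp V d :=
    Sum.elim (fun i => transMotion V d (e i))
      (fun σ => rotMotion ψ (e (loIdx σ)) (e (hiIdx σ))) with hmot
  have hind : LinearIndependent ℝ mot :=
    motions_linearIndependent ψ u0 hψ0 e horth heW
  -- the big linear map
  set L : ((V → ↥Wᗮ) × ((Fin k ⊕ (Σ j : Fin k, Fin j.1)) → ℝ)) →ₗ[ℝ] Esp V d :=
    (packL V d Wᗮ).coprod (Fintype.linearCombination ℝ mot) with hL
  have hLapp : ∀ p, L p = packL V d Wᗮ p.1 + ∑ i, p.2 i • mot i := by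
    intro p
    rw [hL, LinearMap.coprod_apply, Fintype.linearCombination_apply]
  have hLinj : Function.Injective L := by
    rw [← LinearMap.ker_eq_bot, LinearMap.ker_eq_bot']
    rintro ⟨f, a⟩ h
    rw [hLapp] at h
    -- each block of the motion part lies in W
    have hmotW : ∀ i v, blockL V d v (mot i) ∈ W := by
      rintro (i | σ) v
      · exact heW i
      · rw [hmot, Sum.elim_inr, blockL_rotMotion, rotMap_apply]
        exact sub_mem (Submodule.smul_mem _ _ (heW (hiIdx σ)))
          (Submodule.smul_mem _ _ (heW (loIdx σ)))
    have hf : ∀ v, f v = 0 := by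
      intro v
      have hb := congrArg (blockL V d v) h
      rw [map_add, map_zero, blockL_packL, map_sum] at hb
      have hsumW : (∑ i, blockL V d v (a i • mot i)) ∈ W := by
        refine Submodule.sum_mem _ fun i _ => ?_
        rw [map_smul]
        exact Submodule.smul_mem _ _ (hmotW i v)
      have h1 : ((f v : Fsp d)) ∈ W := by
        have : (f v : Fsp d) = -(∑ i, blockL V d v (a i • mot i)) :=
          eq_neg_of_add_eq_zero_left hb
        rw [this]
        exact neg_mem hsumW
      have h2 : (f v : Fsp d) = 0 :=
        Submodule.disjoint_def.mp W.orthogonal_disjoint _ h1 (f v).2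
      exact Subtype.ext h2
    have hf0 : f = 0 := funext hf
    rw [hf0] at h
    have h3 : (∑ i, a i • mot i) = 0 := by
      rw [← h]
      simp only [Prod.fst, map_zero, zero_add]
    have ha : ∀ i, a i = 0 := Fintype.linearIndependent_iff.mp hind a h3
    have ha0 : a = 0 := funext ha
    rw [hf0, ha0]
    rfl
  set T : Submodule ℝ (Esp V d) := LinearMap.range L with hT
  -- rank of T
  have hWperp : finrank ℝ ↥Wᗮ = d - k := by
    have h := W.finrank_add_finrank_orthogonal
    rw [finrank_euclideanSpace, Fintype.card_fin] at h
    omega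
  have hchoose : k + ∑ j ∈ Finset.range k, j = (k + 1).choose 2 := by
    rw [Finset.sum_range_id, show (k+1).choose 2 = k.choose 1 + k.choose 2 from
      Nat.choose_succ_succ' k 1, Nat.choose_one_right, Nat.choose_two_right]
  have hTrank : finrank ℝ ↥T = n * (d - k) + (k + 1).choose 2 := by
    rw [hT, LinearMap.finrank_range_of_inj hLinj, Module.finrank_prod,
      Module.finrank_pi_fintype, Module.finrank_pi]
    rw [Finset.sum_congr rfl fun v _ => hWperp, Finset.sum_const, smul_eq_mul]
    have hc : Fintype.card (Fin k ⊕ (j : Fin k) × Fin (j : ℕ)) = (k + 1).choose 2 := by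
      rw [Fintype.card_sum, Fintype.card_fin, Fintype.card_sigma, ← hchoose]
      congr 1
      rw [← Fin.sum_univ_eq_sum_range]
      exact Finset.sum_congr rfl fun j _ => Fintype.card_fin _
    rw [hc, Finset.card_univ]
  -- the row space is contained in Tᗮ
  set Srow : Submodule ℝ (Esp V d) :=
    (Submodule.span ℝ (rigidityRow d φ '' G.edgeSet)).map
      (WithLp.linearEquiv 2 ℝ (V × Fin d → ℝ)).symm.toLinearMap with hSrowdef
  have hrr : rigidityRank d G φ = finrank ℝ ↥Srow :=
    (LinearEquiv.finrank_map_eq _ _).symm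
  have hST : Srow ≤ Tᗮ := by
    rw [hSrowdef, Submodule.map_le_iff_le_comap, Submodule.span_le]
    rintro r ⟨s, hs, rfl⟩
    induction s using Sym2.ind with
    | _ u v =>
      have hadj : G.Adj u v := hs
      have huv : u ≠ v := hadj.ne
      rw [SetLike.mem_coe, Submodule.mem_comap, Submodule.mem_orthogonal]
      change ∀ t ∈ T, ⟪t, (WithLp.toLp 2 (rigidityRow d φ s(u, v)) : Esp V d)⟫ = 0
      rintro t ⟨⟨f, a⟩, rfl⟩
      rw [hLapp, inner_add_left]
      have hp : ⟪packL V d Wᗮ f, (WithLp.toLp 2 (rigidityRow d φ s(u, v)) : Esp V d)⟫ = 0 := by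
        refine inner_packL_row φ u0 W (fun w => ?_) f huv
        exact hψW w
      have hm : ⟪(∑ i, a i • mot i : Esp V d), (WithLp.toLp 2 (rigidityRow d φ s(u, v)) : Esp V d)⟫ = 0 := by
        rw [sum_inner]
        refine Finset.sum_eq_zero fun i _ => ?_
        rw [real_inner_smul_left]
        rcases i with i | σ
        · rw [hmot, Sum.elim_inl, inner_transMotion_row φ _ huv, mul_zero]
        · rw [hmot, Sum.elim_inr, inner_rotMotion_row φ u0 _ _ huv, mul_zero]
      rw [hp, hm, add_zero]
  -- conclude
  have horthrank : finrank ℝ ↥T + finrank ℝ ↥Tᗮ = n * d := by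
    have h := T.finrank_add_finrank_orthogonal
    rwa [finrank_euclideanSpace, Fintype.card_prod, Fintype.card_fin] at h
  have hmono : finrank ℝ ↥Srow ≤ finrank ℝ ↥Tᗮ := Submodule.finrank_mono hST
  have hXYZ : n * (d - k) + n * k = n * d := by
    rw [← Nat.mul_add]
    congr 1
    omega
  have h4 : (d + 1).choose 2 + n * k ≤ (k + 1).choose 2 + n * d := by
    have h5 := choose_aux n k (d - k) (by omega)
    have h6 : k + (d - k) = d := by omega
    rwa [h6] at h5
  have hfinal : (d + 1).choose 2 ≤ n * (d - k) + (k + 1).choose 2 := by omega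
  rw [hrr]
  calc finrank ℝ ↥Srow ≤ finrank ℝ ↥Tᗮ := hmono
    _ = n * d - (n * (d - k) + (k + 1).choose 2) := by omega
    _ ≤ n * d - (d + 1).choose 2 := Nat.sub_le_sub_left hfinal _
    _ = d * n - (d + 1).choose 2 := by rw [Nat.mul_comm]
end

section
/- (Gluing Lemma) Let d ≥ 1 and let G₁ and G₂ be finite simple graphs that are both generically d-rigid and such that the intersection G₁ ∩ G₂ (common vertices and common edges) has at least d vertices. Then the union G₁ ∪ G₂ is generically d-rigid. -/
namespace Gluing

open Module Submodule Finset

variable {V : Type*} [Fintype V] {d : ℕ}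
set_option linter.unusedSectionVars false

open scoped Classical

lemma rigidityRow_mk (φ : V → EuclideanSpace ℝ (Fin d)) (u v : V) (p : V × Fin d) :
    rigidityRow d φ s(u, v) p =
      if p.1 = u then φ u p.2 - φ v p.2
      else if p.1 = v then φ v p.2 - φ u p.2 else 0 := by
  simp [rigidityRow]

/-- index of pairs i < j -/
abbrev Pairs (d : ℕ) := {q : Fin d × Fin d // q.1 < q.2}

/-- index of the infinitesimal motions family -/
abbrev MI (d : ℕ) := Fin d ⊕ Pairs d

/-- the family of elementary infinitesimal motions: translations and rotations -/
noncomputable def MotF (φ : V → EuclideanSpace ℝ (Fin d)) : MI d → (V × Fin d → ℝ)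
  | .inl c => fun p => if p.2 = c then 1 else 0
  | .inr q => fun p =>
      if p.2 = q.1.1 then φ p.1 q.1.2 else if p.2 = q.1.2 then -(φ p.1 q.1.1) else 0

lemma row_diag (φ : V → EuclideanSpace ℝ (Fin d)) (u : V) :
    rigidityRow d φ s(u, u) = 0 := by
  funext p
  rw [rigidityRow_mk]
  split_ifs <;> simp

/-- every rigidity row is orthogonal to every elementary motion -/
lemma row_perp (φ : V → EuclideanSpace ℝ (Fin d)) (e : Sym2 V) (i : MI d) :
    ∑ p : V × Fin d, rigidityRow d φ e p * MotF φ i p = 0 := by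
  induction e using Sym2.inductionOn with
  | hf u v =>
    by_cases huv : u = v
    · subst huv; simp [row_diag]
    · have key : ∀ w : V, w ≠ u → w ≠ v →
          ∀ c : Fin d, rigidityRow d φ s(u, v) (w, c) = 0 := by
        intro w hwu hwv c
        rw [rigidityRow_mk]
        simp [hwu, hwv]
      rw [Fintype.sum_prod_type]
      rw [← Finset.sum_subset (Finset.subset_univ ({u, v} : Finset V))
        (by
          intro w _ hw
          simp only [Finset.mem_insert, Finset.mem_singleton] at hw
          push_neg at hw
          exact Finset.sum_eq_zero fun c _ => by rw [key w hw.1 hw.2 c, zero_mul])]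
      rw [Finset.sum_pair huv]
      cases i with
      | inl c₀ =>
        have hu : ∀ c : Fin d, rigidityRow d φ s(u,v) (u, c) * MotF φ (.inl c₀) (u, c)
            = if c = c₀ then φ u c₀ - φ v c₀ else 0 := by
          intro c
          rw [rigidityRow_mk]
          simp only [MotF]
          by_cases h : c = c₀
          · subst h; simp
          · simp [h]
        have hv : ∀ c : Fin d, rigidityRow d φ s(u,v) (v, c) * MotF φ (.inl c₀) (v, c)
            = if c = c₀ then φ v c₀ - φ u c₀ else 0 := by
          intro c
          rw [rigidityRow_mk]
          simp only [MotF]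
          have hvu : v ≠ u := Ne.symm huv
          by_cases h : c = c₀
          · subst h; simp [hvu]
          · simp [h]
        simp only [hu, hv, Finset.sum_ite_eq' Finset.univ c₀, Finset.mem_univ, if_pos]
        ring
      | inr q =>
        obtain ⟨⟨i, j⟩, hij⟩ := q
        have hij' : i ≠ j := ne_of_lt hij
        have hw : ∀ w w' : V, ∀ c : Fin d,
            rigidityRow d φ s(u,v) (w, c) * MotF φ (.inr ⟨(i,j),hij⟩) (w, c) =
            (rigidityRow d φ s(u,v) (w, c)) *
              (if c = i then φ w j else if c = j then -(φ w i) else 0) := by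
          intro w w' c; rfl
        have sum_w : ∀ w : V,
            ∑ c : Fin d, rigidityRow d φ s(u,v) (w, c) * MotF φ (.inr ⟨(i,j),hij⟩) (w, c)
            = rigidityRow d φ s(u,v) (w, i) * φ w j
              + rigidityRow d φ s(u,v) (w, j) * (-(φ w i)) := by
          intro w
          rw [← Finset.sum_subset (Finset.subset_univ ({i, j} : Finset (Fin d)))
            (by
              intro c _ hc
              simp only [Finset.mem_insert, Finset.mem_singleton] at hc
              push_neg at hc
              simp only [MotF, if_neg hc.1, if_neg hc.2, mul_zero])]
          rw [Finset.sum_pair hij']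
          simp only [MotF, if_pos rfl, if_neg hij'.symm]
          simp
        rw [sum_w u, sum_w v]
        rw [rigidityRow_mk, rigidityRow_mk, rigidityRow_mk, rigidityRow_mk]
        simp only [if_pos rfl, if_neg huv, if_neg (Ne.symm huv), if_pos trivial]
        ring

end Gluing

namespace Gluing2
open Module Submodule Finset Matrix
open scoped Classical
variable {V : Type*} [Fintype V] {d : ℕ}
set_option linter.unusedSectionVars false

/-- equiv to compute the cardinality of Pairs -/
def pairsEquiv (d : ℕ) : Gluing.Pairs d ≃ (Σ j : Fin d, Fin j.1) where
  toFun q := ⟨q.1.2, ⟨q.1.1.1, q.2⟩⟩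
  invFun s := ⟨(⟨s.2.1, s.2.2.trans s.1.2⟩, s.1), s.2.2⟩
  left_inv q := by
    obtain ⟨⟨i, j⟩, h⟩ := q
    rfl
  right_inv s := by
    obtain ⟨j, k⟩ := s
    rfl

lemma card_pairs (d : ℕ) : Fintype.card (Gluing.Pairs d) * 2 = d * (d - 1) := by
  rw [Fintype.card_congr (pairsEquiv d), Fintype.card_sigma]
  simp only [Fintype.card_fin]
  rw [Fin.sum_univ_eq_sum_range (fun i => i) d, Finset.sum_range_id_mul_two]

lemma card_MI (d : ℕ) : Fintype.card (Gluing.MI d) = (d + 1).choose 2 := by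
  have h := card_pairs d
  have hcard : Fintype.card (Gluing.MI d) = d + Fintype.card (Gluing.Pairs d) := by
    simp [Gluing.MI]
  have h2 : (d + 1) * d = 2 * (d + Fintype.card (Gluing.Pairs d)) := by
    cases d with
    | zero => simpa using h.symm
    | succ n =>
      simp only [Nat.add_sub_cancel] at h
      nlinarith [h]
  rw [hcard, Nat.choose_two_right, Nat.add_sub_cancel, h2,
    Nat.mul_div_cancel_left _ (by norm_num : 0 < 2)]

/-- skew-symmetric matrix vanishing on d-1 independent vectors is zero -/
lemma skew_zero {d : ℕ} (B : Matrix (Fin d) (Fin d) ℝ) (hB : Bᵀ = -B)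
    {κ : Type*} [Fintype κ] (w : κ → (Fin d → ℝ)) (hw : LinearIndependent ℝ w)
    (hcard : Fintype.card κ + 1 = d) (hker : ∀ k, B.mulVec (w k) = 0) : B = 0 := by
  have hBentry : ∀ c l, B l c = -(B c l) := by
    intro c l
    have := congrFun (congrFun hB c) l
    simpa [Matrix.transpose_apply] using this
  have hBskew : ∀ x y : Fin d → ℝ,
      ∑ c, B.mulVec x c * y c = -∑ c, B.mulVec y c * x c := by
    intro x y
    simp only [Matrix.mulVec, dotProduct, Finset.sum_mul, ← Finset.sum_neg_distrib]
    rw [Finset.sum_comm]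
    apply Finset.sum_congr rfl
    intro o _
    apply Finset.sum_congr rfl
    intro i _
    rw [hBentry o i]
    ring
  -- find u outside the span
  have hne : span ℝ (Set.range w) ≠ ⊤ := by
    intro hsp
    have h1 : finrank ℝ (span ℝ (Set.range w)) = Fintype.card κ := finrank_span_eq_card hw
    rw [hsp, finrank_top, finrank_pi, Fintype.card_fin] at h1
    omega
  have : ∃ u, u ∉ span ℝ (Set.range w) := by
    by_contra hcon
    push_neg at hcon
    exact hne (Submodule.eq_top_iff'.2 hcon)
  obtain ⟨u, hu⟩ := this
  have hw' : LinearIndependent ℝ (fun o => Option.casesOn' o u w : Option κ → (Fin d → ℝ)) :=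
    hw.option hu
  have hcard' : Fintype.card (Option κ) = finrank ℝ (Fin d → ℝ) := by
    rw [Fintype.card_option, finrank_pi, Fintype.card_fin]; omega
  have : Nonempty (Option κ) := ⟨none⟩
  let b := basisOfLinearIndependentOfCardEqFinrank hw' hcard'
  have hb : ⇑b = (fun o => Option.casesOn' o u w) :=
    coe_basisOfLinearIndependentOfCardEqFinrank hw' hcard'
  set z := B.mulVec u with hz
  have hzdot : ∀ o : Option κ, ∑ c, z c * (b o) c = 0 := by
    intro o
    cases o with
    | none =>
      have h1 := hBskew u u
      have : (b none) = u := by rw [hb]; rfl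
      rw [this]
      linarith [h1]
    | some k =>
      have : (b (some k)) = w k := by rw [hb]; rfl
      rw [this, hBskew u (w k), hker k]
      simp
  -- z = 0
  have hzero : z = 0 := by
    have hfun : (∑ c, z c • (LinearMap.proj c : (Fin d → ℝ) →ₗ[ℝ] ℝ)) = 0 := by
      apply b.ext
      intro o
      simp only [LinearMap.coe_sum, Finset.sum_apply, LinearMap.smul_apply,
        LinearMap.proj_apply, LinearMap.zero_apply, smul_eq_mul]
      exact hzdot o
    have hzz : ∑ c, z c * z c = 0 := by
      have := congrFun (congrArg (fun (f : (Fin d → ℝ) →ₗ[ℝ] ℝ) => f.toFun) hfun) z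
      simpa [smul_eq_mul] using this
    funext c
    have hnn : ∀ c ∈ Finset.univ, 0 ≤ z c * z c := fun c _ => mul_self_nonneg _
    have := (Finset.sum_eq_zero_iff_of_nonneg hnn).1 hzz c (Finset.mem_univ c)
    exact mul_self_eq_zero.1 this
  -- B kills a basis
  have hlin : Matrix.toLin' B = 0 := by
    apply b.ext
    intro o
    rw [Matrix.toLin'_apply, LinearMap.zero_apply]
    cases o with
    | none =>
      have : (b none) = u := by rw [hb]; rfl
      rw [this, ← hz, hzero]
    | some k =>
      have : (b (some k)) = w k := by rw [hb]; rfl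
      rw [this, hker k]
  have := Matrix.toLin'.injective (by rw [hlin, map_zero] :
    Matrix.toLin' B = Matrix.toLin' 0)
  exact this

end Gluing2

namespace Gluing
open Module Submodule Finset Matrix
open scoped Classical
variable {V : Type*} [Fintype V] {d : ℕ}
set_option linter.unusedSectionVars false

/-- restriction of functions to columns indexed by a subset of vertices -/
noncomputable def resL (S : Set V) (d : ℕ) : (V × Fin d → ℝ) →ₗ[ℝ] (↥S × Fin d → ℝ) :=
  LinearMap.funLeft ℝ ℝ (fun q => (↑q.1, q.2))

/-- elementary skew matrix entries -/
noncomputable def Epair (q : Pairs d) (c l : Fin d) : ℝ :=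
  (if c = q.1.1 ∧ l = q.1.2 then 1 else 0) - (if c = q.1.2 ∧ l = q.1.1 then 1 else 0)

lemma Epair_antisymm (q : Pairs d) (c l : Fin d) : Epair q l c = -Epair q c l := by
  unfold Epair
  split_ifs <;> try ring
  all_goals exfalso <;> tauto

lemma motF_eq_sum (φ : V → EuclideanSpace ℝ (Fin d)) (q : Pairs d) (v : V) (c : Fin d) :
    MotF φ (Sum.inr q) (v, c) = ∑ l, Epair q c l * φ v l := by
  obtain ⟨⟨i, j⟩, hij⟩ := q
  have hij' : i ≠ j := ne_of_lt hij
  simp only [MotF, Epair, sub_mul, Finset.sum_sub_distrib, ite_mul, one_mul, zero_mul]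
  by_cases hci : c = i
  · subst hci
    simp [hij', Finset.sum_ite_eq']
  · by_cases hcj : c = j
    · subst hcj
      simp [hci, Finset.sum_ite_eq']
    · simp [hci, hcj]

lemma motF_indep (φ : V → EuclideanSpace ℝ (Fin d)) (S : Set V)
    (p : Fin d → V) (hpS : ∀ k, p k ∈ S) (k₀ : Fin d)
    (hw : LinearIndependent ℝ (fun k : {k : Fin d // k ≠ k₀} =>
      (fun c => φ (p k.1) c - φ (p k₀) c : Fin d → ℝ))) :
    LinearIndependent ℝ (fun i : MI d => resL S d (MotF φ i)) := by
  rw [Fintype.linearIndependent_iff]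
  intro g hg
  set a : Fin d → ℝ := fun c => g (Sum.inl c) with ha_def
  set bq : Pairs d → ℝ := fun q => g (Sum.inr q) with hb_def
  set Bm : Matrix (Fin d) (Fin d) ℝ := fun c l => ∑ q : Pairs d, bq q * Epair q c l with hBm_def
  -- evaluation of the vanishing combination
  have heval : ∀ v, v ∈ S → ∀ c : Fin d, a c + ∑ l, Bm c l * φ v l = 0 := by
    intro v hv c
    have h0 := congrFun hg (⟨v, hv⟩, c)
    simp only [Finset.sum_apply, Pi.zero_apply, Pi.smul_apply, smul_eq_mul, resL,
      LinearMap.funLeft_apply] at h0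
    rw [Fintype.sum_sum_type] at h0
    have hfirst : ∑ c₀ : Fin d, g (Sum.inl c₀) * MotF φ (Sum.inl c₀) (v, c) = a c := by
      simp only [MotF, mul_ite, mul_one, mul_zero]
      rw [Finset.sum_ite_eq Finset.univ c (fun c₀ => g (Sum.inl c₀))]
      simp [ha_def]
    have hsecond : ∑ q : Pairs d, g (Sum.inr q) * MotF φ (Sum.inr q) (v, c)
        = ∑ l, Bm c l * φ v l := by
      have hq : ∀ q : Pairs d, g (Sum.inr q) * MotF φ (Sum.inr q) (v, c)
          = ∑ l, bq q * Epair q c l * φ v l := by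
        intro q
        rw [motF_eq_sum, Finset.mul_sum]
        simp [mul_assoc, hb_def]
      rw [Finset.sum_congr rfl (fun q _ => hq q), Finset.sum_comm]
      apply Finset.sum_congr rfl
      intro l _
      rw [show Bm c l = ∑ q : Pairs d, bq q * Epair q c l from rfl, Finset.sum_mul]
    rw [hfirst, hsecond] at h0
    exact h0
  -- skewness
  have hBsk : Bmᵀ = -Bm := by
    funext c l
    simp only [Matrix.transpose_apply, Matrix.neg_apply, hBm_def]
    show ∑ q : Pairs d, bq q * Epair q l c = -∑ q : Pairs d, bq q * Epair q c l
    rw [← Finset.sum_neg_distrib]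
    apply Finset.sum_congr rfl
    intro q _
    rw [Epair_antisymm]
    ring
  -- kernel conditions
  have hker : ∀ k : {k : Fin d // k ≠ k₀},
      Bm.mulVec (fun c => φ (p k.1) c - φ (p k₀) c) = 0 := by
    intro k
    funext c
    have h1 := heval (p k.1) (hpS k.1) c
    have h2 := heval (p k₀) (hpS k₀) c
    simp only [Matrix.mulVec, dotProduct, Pi.zero_apply]
    have hsub : ∑ l, Bm c l * (φ (p k.1) l - φ (p k₀) l)
        = ∑ l, Bm c l * φ (p k.1) l - ∑ l, Bm c l * φ (p k₀) l := by
      rw [← Finset.sum_sub_distrib]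
      exact Finset.sum_congr rfl fun l _ => by ring
    rw [hsub]
    linarith
  have hcardκ : Fintype.card {k : Fin d // k ≠ k₀} + 1 = d := by
    have h1 : Fintype.card {k : Fin d // ¬ (k = k₀)} =
        Fintype.card (Fin d) - Fintype.card {k : Fin d // k = k₀} :=
      Fintype.card_subtype_compl _
    rw [Fintype.card_subtype_eq, Fintype.card_fin] at h1
    have h2 : Fintype.card {k : Fin d // k ≠ k₀} = Fintype.card {k : Fin d // ¬ (k = k₀)} := rfl
    have hd : 1 ≤ d := Fin.pos k₀
    omega
  have hB0 : Bm = 0 := Gluing2.skew_zero Bm hBsk _ hw hcardκ hker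
  -- recover coefficients
  have hbq : ∀ q : Pairs d, bq q = 0 := by
    intro q
    obtain ⟨⟨i, j⟩, hij⟩ := q
    have hE1 : Epair (⟨(i, j), hij⟩ : Pairs d) i j = 1 := by
      unfold Epair
      rw [if_pos ⟨rfl, rfl⟩, if_neg (fun h => (ne_of_lt hij) h.1)]
      norm_num
    have hBij : Bm i j = bq ⟨(i, j), hij⟩ := by
      rw [show Bm i j = ∑ q : Pairs d, bq q * Epair q i j from rfl]
      rw [Finset.sum_eq_single (⟨(i, j), hij⟩ : Pairs d)]
      · rw [hE1, mul_one]
      · intro q' _ hne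
        obtain ⟨⟨i', j'⟩, hij'⟩ := q'
        have h1 : ¬ (i = j' ∧ j = i') := by
          rintro ⟨rfl, rfl⟩
          exact absurd (lt_trans hij hij') (lt_irrefl _)
        have h2 : ¬ (i = i' ∧ j = j') := by
          rintro ⟨rfl, rfl⟩
          exact hne rfl
        simp [Epair, h1, h2]
      · intro h
        exact absurd (Finset.mem_univ _) h
    rw [hB0] at hBij
    simp at hBij
    exact hBij.symm
  have haz : ∀ c, a c = 0 := by
    intro c
    have h3 := heval (p k₀) (hpS k₀) c
    rw [hB0] at h3
    simpa using h3
  intro i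
  cases i with
  | inl c => exact haz c
  | inr q => exact hbq q

end Gluing

namespace Gluing
open Module Submodule Finset Matrix

lemma gram_helper {κ ι : Type*} [Fintype κ] [Fintype ι] (w : κ → ι → ℝ) (u : κ → ℝ) (i : κ) :
    ∑ j, (∑ p, w i p * w j p) * u j = ∑ p, w i p * (∑ j, u j * w j p) := by
  simp only [Finset.sum_mul, Finset.mul_sum]
  rw [Finset.sum_comm]
  exact Finset.sum_congr rfl fun p _ => Finset.sum_congr rfl fun j _ => by ring

lemma gram_det_ne_zero_iff {κ ι : Type*} [Fintype κ] [Fintype ι] [DecidableEq κ]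
    (w : κ → ι → ℝ) :
    (Matrix.of fun i j => ∑ p, w i p * w j p).det ≠ 0 ↔ LinearIndependent ℝ w := by
  set G : Matrix κ κ ℝ := Matrix.of fun i j => ∑ p, w i p * w j p with hG
  constructor
  · intro hdet
    rw [Fintype.linearIndependent_iff]
    intro g hsum
    have hpt : ∀ p, ∑ j, g j * w j p = 0 := by
      intro p
      have := congrFun hsum p
      simpa [Finset.sum_apply] using this
    have hmv : G.mulVec g = 0 := by
      funext i
      simp only [Matrix.mulVec, dotProduct, Pi.zero_apply]
      have : ∑ j, G i j * g j = ∑ p, w i p * (∑ j, g j * w j p) := gram_helper w g i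
      rw [this]
      simp [hpt]
    intro i
    by_contra hgi
    have hg0 : g ≠ 0 := fun h => hgi (by rw [h]; rfl)
    exact hdet (Matrix.exists_mulVec_eq_zero_iff.1 ⟨g, hg0, hmv⟩)
  · intro hind hdet
    obtain ⟨v, hv0, hmv⟩ := Matrix.exists_mulVec_eq_zero_iff.2 hdet
    set t : ι → ℝ := fun p => ∑ j, v j * w j p with ht
    have hvi : ∀ i, ∑ p, w i p * t p = 0 := by
      intro i
      have h0 := congrFun hmv i
      simp only [Matrix.mulVec, dotProduct, Pi.zero_apply] at h0
      have h1 : ∑ j, (∑ p, w i p * w j p) * v j = 0 := h0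
      rw [gram_helper w v i] at h1
      exact h1
    have htt : ∑ p, t p * t p = 0 := by
      have h1 : ∑ p, t p * t p = ∑ i, v i * ∑ p, w i p * t p := by
        simp only [Finset.mul_sum]
        rw [Finset.sum_comm]
        apply Finset.sum_congr rfl
        intro p _
        rw [show t p * t p = (∑ j, v j * w j p) * t p from rfl, Finset.sum_mul]
        exact Finset.sum_congr rfl fun i _ => by ring
      rw [h1]
      simp [hvi]
    have htz : ∀ p, t p = 0 := by
      intro p
      have := (Finset.sum_eq_zero_iff_of_nonneg
        (fun p _ => mul_self_nonneg (t p))).1 htt p (Finset.mem_univ p)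
      exact mul_self_eq_zero.1 this
    have : ∑ j, v j • w j = 0 := by
      funext p
      simp only [Finset.sum_apply, Pi.smul_apply, smul_eq_mul, Pi.zero_apply]
      exact htz p
    have hv := (Fintype.linearIndependent_iff.1 hind) v this
    exact hv0 (funext hv)

end Gluing

namespace Gluing
open Module Submodule Finset Matrix
open scoped Classical
variable {V : Type*} [Fintype V] {d : ℕ}
set_option linter.unusedSectionVars false

/-- extension of functions by zero -/
noncomputable def extL (S : Set V) (d : ℕ) : (↥S × Fin d → ℝ) →ₗ[ℝ] (V × Fin d → ℝ) where
  toFun f := fun p => if h : p.1 ∈ S then f (⟨p.1, h⟩, p.2) else 0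
  map_add' f g := by funext p; by_cases h : p.1 ∈ S <;> simp [h]
  map_smul' c f := by funext p; by_cases h : p.1 ∈ S <;> simp [h]

lemma extL_injective (S : Set V) : Function.Injective (extL S d) := by
  intro f g hfg
  funext q
  obtain ⟨⟨v, hv⟩, c⟩ := q
  have := congrFun hfg (v, c)
  simpa [extL, hv] using this

lemma extL_row (S : Set V) (φ : V → EuclideanSpace ℝ (Fin d)) (u v : ↥S) :
    extL S d (rigidityRow d (φ ∘ (↑)) s(u, v)) = rigidityRow d φ s((u : V), (v : V)) := by
  funext p
  obtain ⟨w, c⟩ := p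
  by_cases hw : w ∈ S
  · have hl : extL S d (rigidityRow d (φ ∘ (↑)) s(u, v)) (w, c)
        = rigidityRow d (φ ∘ (↑)) s(u, v) (⟨w, hw⟩, c) := by
      simp [extL, hw]
    rw [hl, rigidityRow_mk, rigidityRow_mk]
    by_cases h1 : w = ↑u
    · rw [if_pos (Subtype.ext h1 : (⟨w, hw⟩ : ↥S) = u), if_pos h1]
      rfl
    · rw [if_neg (fun h => h1 (congrArg Subtype.val h)), if_neg h1]
      by_cases h2 : w = ↑v
      · rw [if_pos (Subtype.ext h2 : (⟨w, hw⟩ : ↥S) = v), if_pos h2]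
        rfl
      · rw [if_neg (fun h => h2 (congrArg Subtype.val h)), if_neg h2]
  · have hl : extL S d (rigidityRow d (φ ∘ (↑)) s(u, v)) (w, c) = 0 := by
      simp [extL, hw]
    rw [hl, rigidityRow_mk]
    rw [if_neg (show ¬ w = ↑u from fun h => hw (h ▸ u.2)), if_neg (show ¬ w = ↑v from fun h => hw (h ▸ v.2))]

lemma extL_row_sym2 (S : Set V) (φ : V → EuclideanSpace ℝ (Fin d)) (e : Sym2 ↥S) :
    extL S d (rigidityRow d (φ ∘ (↑)) e) = rigidityRow d φ (Sym2.map (↑) e) := by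
  induction e using Sym2.inductionOn with
  | hf u v => rw [Sym2.map_pair_eq]; exact extL_row S φ u v

lemma rank_transfer (G' : SimpleGraph.Subgraph (⊤ : SimpleGraph V))
    (φ : V → EuclideanSpace ℝ (Fin d)) :
    rigidityRank d G'.coe (φ ∘ (↑)) =
      Module.finrank ℝ (span ℝ (rigidityRow d φ '' G'.edgeSet)) := by
  unfold rigidityRank
  have himg : extL G'.verts d '' (rigidityRow d (φ ∘ (↑)) '' G'.coe.edgeSet)
      = rigidityRow d φ '' G'.edgeSet := by
    rw [← SimpleGraph.Subgraph.image_coe_edgeSet_coe G', ← Set.image_comp, ← Set.image_comp]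
    apply Set.image_congr
    intro e _
    exact extL_row_sym2 G'.verts φ e
  rw [← himg, ← Submodule.map_span]
  exact (LinearEquiv.finrank_eq
    (Submodule.equivMapOfInjective _ (extL_injective G'.verts) _))

/-- functions supported on columns of S -/
noncomputable def suppSub (S : Set V) (d : ℕ) : Submodule ℝ (V × Fin d → ℝ) where
  carrier := {x | ∀ p : V × Fin d, p.1 ∉ S → x p = 0}
  add_mem' := fun {x y} hx hy p hp => by
    simp only [Pi.add_apply, hx p hp, hy p hp, add_zero]
  zero_mem' := fun p _ => rfl
  smul_mem' := fun c x hx p hp => by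
    simp only [Pi.smul_apply, hx p hp, smul_zero]

/-- functions orthogonal to all elementary motions -/
noncomputable def perpSub (φ : V → EuclideanSpace ℝ (Fin d)) :
    Submodule ℝ (V × Fin d → ℝ) where
  carrier := {x | ∀ i : MI d, ∑ p, x p * MotF φ i p = 0}
  add_mem' := fun {x y} hx hy i => by
    simp only [Pi.add_apply, add_mul, Finset.sum_add_distrib, hx i, hy i, add_zero]
  zero_mem' := fun i => by simp
  smul_mem' := fun c x hx i => by
    simp only [Pi.smul_apply, smul_eq_mul, mul_assoc, ← Finset.mul_sum, hx i, mul_zero]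

lemma row_mem_suppSub (G' : SimpleGraph.Subgraph (⊤ : SimpleGraph V))
    (φ : V → EuclideanSpace ℝ (Fin d)) {e : Sym2 V} (he : e ∈ G'.edgeSet) :
    rigidityRow d φ e ∈ suppSub G'.verts d := by
  induction e using Sym2.inductionOn with
  | hf u v =>
    intro p hp
    have hu : u ∈ G'.verts := G'.mem_verts_of_mem_edge he (Sym2.mem_mk_left u v)
    have hv : v ∈ G'.verts := G'.mem_verts_of_mem_edge he (Sym2.mem_mk_right u v)
    rw [rigidityRow_mk]
    rw [if_neg (show ¬ p.1 = u from fun h => hp (h ▸ hu)), if_neg (show ¬ p.1 = v from fun h => hp (h ▸ hv))]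

lemma row_mem_perpSub (φ : V → EuclideanSpace ℝ (Fin d)) (e : Sym2 V) :
    rigidityRow d φ e ∈ perpSub φ := fun i => row_perp φ e i

lemma sum_subtype_set (S : Set V) (g : V → ℝ) (hg : ∀ v ∉ S, g v = 0) :
    ∑ v : ↥S, g ↑v = ∑ v : V, g v := by
  rw [← Finset.sum_subset (Finset.subset_univ S.toFinset)
    (fun v _ hv => hg v (by simpa using hv))]
  rw [← Finset.sum_coe_sort S.toFinset g]
  exact Fintype.sum_equiv (Equiv.subtypeEquivRight (by simp)) _ _ (fun q => rfl)

lemma sum_restrict (S : Set V) (f x : V × Fin d → ℝ)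
    (hx : ∀ p : V × Fin d, p.1 ∉ S → x p = 0) :
    ∑ q : ↥S × Fin d, f (↑q.1, q.2) * x (↑q.1, q.2) = ∑ p : V × Fin d, f p * x p := by
  rw [Fintype.sum_prod_type, Fintype.sum_prod_type]
  exact sum_subtype_set S (fun v => ∑ c, f (v, c) * x (v, c))
    (fun v hv => Finset.sum_eq_zero fun c _ => by rw [hx (v, c) hv, mul_zero])

end Gluing

namespace Gluing
open Module Submodule Finset Matrix
open scoped Classical
variable {V : Type*} [Fintype V] {d : ℕ}
set_option linter.unusedSectionVars false

lemma ncard_eq_card (S : Set V) : S.ncard = Fintype.card ↥S := by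
  rw [← Nat.card_coe_set_eq, Nat.card_eq_fintype_card]

/-- main upper bound: a submodule of vectors supported on `S` and orthogonal to all
motions has dimension at most `d * |S| - (d+1 choose 2)`, provided the motions restricted
to `S` are independent. -/
lemma finrank_le_of_supp_perp (φ : V → EuclideanSpace ℝ (Fin d)) (S : Set V)
    (X : Submodule ℝ (V × Fin d → ℝ)) (hX : X ≤ suppSub S d ⊓ perpSub φ)
    (hmot : LinearIndependent ℝ (fun i : MI d => resL S d (MotF φ i))) :
    Module.finrank ℝ X ≤ d * S.ncard - (d + 1).choose 2 := by
  set L : (↥S × Fin d → ℝ) ≃ₗ[ℝ] EuclideanSpace ℝ (↥S × Fin d) :=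
    (WithLp.linearEquiv 2 ℝ (↥S × Fin d → ℝ)).symm with hL
  have hLapp : ∀ (x : ↥S × Fin d → ℝ) (q : ↥S × Fin d), L x q = x q := fun x q => rfl
  set f : MI d → EuclideanSpace ℝ (↥S × Fin d) := fun i => L (resL S d (MotF φ i)) with hf
  set M : Submodule ℝ (EuclideanSpace ℝ (↥S × Fin d)) := span ℝ (Set.range f) with hM
  have hMrank : finrank ℝ M = (d + 1).choose 2 := by
    have hfc : f = ⇑L.toLinearMap ∘ (fun i : MI d => resL S d (MotF φ i)) := rfl
    rw [hM, hfc, finrank_span_eq_card (hmot.map' L.toLinearMap L.ker), Gluing2.card_MI]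
  set T : X →ₗ[ℝ] EuclideanSpace ℝ (↥S × Fin d) :=
    (L.toLinearMap.comp (resL S d)).comp X.subtype with hT
  have hTinj : Function.Injective T := by
    rw [← LinearMap.ker_eq_bot, LinearMap.ker_eq_bot']
    rintro ⟨x, hx⟩ h0
    have hres : ∀ q : ↥S × Fin d, x (↑q.1, q.2) = 0 := by
      intro q
      have h2 := congrArg (fun v : EuclideanSpace ℝ (↥S × Fin d) => v q) h0
      simpa [hT, hLapp, resL, LinearMap.funLeft_apply] using h2
    apply Subtype.ext
    funext p
    by_cases hp : p.1 ∈ S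
    · have := hres (⟨p.1, hp⟩, p.2)
      simpa using this
    · exact (Submodule.mem_inf.1 (hX hx)).1 p hp
  have hrange : LinearMap.range T ≤ Mᗮ := by
    rintro _ ⟨⟨x, hx⟩, rfl⟩
    rw [Submodule.mem_orthogonal]
    intro u hu
    induction hu using Submodule.span_induction with
    | mem y hy =>
        obtain ⟨i, rfl⟩ := hy
        have hinner : (inner ℝ (f i) (T ⟨x, hx⟩) : ℝ)
            = ∑ q : ↥S × Fin d, MotF φ i (↑q.1, q.2) * x (↑q.1, q.2) := by
          rw [PiLp.inner_apply]
          apply Finset.sum_congr rfl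
          intro q _
          simp [RCLike.inner_apply, hf, hLapp, resL, LinearMap.funLeft_apply, hT]
          ring
        rw [hinner, sum_restrict S _ x (Submodule.mem_inf.1 (hX hx)).1]
        have hperp := (Submodule.mem_inf.1 (hX hx)).2 i
        rw [← hperp]
        exact Finset.sum_congr rfl fun p _ => mul_comm _ _
    | zero => simp
    | add y z hy hz ihy ihz => rw [inner_add_left, ihy, ihz, add_zero]
    | smul a y hy ihy => rw [real_inner_smul_left, ihy, mul_zero]
  have h1 : finrank ℝ X = finrank ℝ (LinearMap.range T) :=
    (LinearMap.finrank_range_of_inj hTinj).symm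
  have h2 : finrank ℝ (LinearMap.range T) ≤ finrank ℝ Mᗮ :=
    Submodule.finrank_mono hrange
  have h3 : finrank ℝ M + finrank ℝ Mᗮ = finrank ℝ (EuclideanSpace ℝ (↥S × Fin d)) :=
    Submodule.finrank_add_finrank_orthogonal M
  have h4 : finrank ℝ (EuclideanSpace ℝ (↥S × Fin d)) = d * S.ncard := by
    rw [finrank_euclideanSpace, Fintype.card_prod, Fintype.card_fin, ncard_eq_card]
    ring
  omega

end Gluing

namespace Gluing
open Module Submodule Finset Matrix MvPolynomial
open scoped Classical
variable {V : Type*} [Fintype V] {d : ℕ}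
set_option linter.unusedSectionVars false

/-- reinterpret a flat assignment as a configuration -/
noncomputable def toPhi (ψ : V × Fin d → ℝ) : V → EuclideanSpace ℝ (Fin d) :=
  fun v => WithLp.toLp 2 (fun c => ψ (v, c))

/-- eval of a polynomial gram determinant detects linear independence -/
lemma eval_gram_det {κ σ ι : Type*} [Fintype κ] [DecidableEq κ] [Fintype ι]
    (r : κ → ι → MvPolynomial σ ℝ) (ψ : σ → ℝ) :
    MvPolynomial.eval ψ ((Matrix.of fun i j => ∑ p, r i p * r j p).det) ≠ 0 ↔
      LinearIndependent ℝ (fun i p => MvPolynomial.eval ψ (r i p)) := by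
  rw [RingHom.map_det]
  have hmap : (MvPolynomial.eval ψ).mapMatrix (Matrix.of fun i j => ∑ p, r i p * r j p)
      = Matrix.of fun i j => ∑ p, (MvPolynomial.eval ψ (r i p)) *
          (MvPolynomial.eval ψ (r j p)) := by
    ext i j
    simp [map_sum]
  rw [hmap, gram_det_ne_zero_iff]

/-- polynomial version of a rigidity row, for an ordered pair of vertices -/
noncomputable def polyRow (uv : V × V) : V × Fin d → MvPolynomial (V × Fin d) ℝ :=
  fun p => if p.1 = uv.1 then X (uv.1, p.2) - X (uv.2, p.2)
    else if p.1 = uv.2 then X (uv.2, p.2) - X (uv.1, p.2) else 0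

lemma eval_polyRow (uv : V × V) (ψ : V × Fin d → ℝ) (p : V × Fin d) :
    MvPolynomial.eval ψ (polyRow uv p) = rigidityRow d (toPhi ψ) s(uv.1, uv.2) p := by
  rw [rigidityRow_mk]
  unfold polyRow
  split_ifs <;> simp [toPhi]

/-- polynomial difference vectors for affine independence -/
noncomputable def polyDiff (pp : Fin d → V) (k₀ : Fin d) (k : {k : Fin d // k ≠ k₀}) :
    Fin d → MvPolynomial (V × Fin d) ℝ :=
  fun c => X (pp k.1, c) - X (pp k₀, c)

lemma eval_polyDiff (pp : Fin d → V) (k₀ : Fin d) (k : {k : Fin d // k ≠ k₀})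
    (ψ : V × Fin d → ℝ) (c : Fin d) :
    MvPolynomial.eval ψ (polyDiff pp k₀ k c) = toPhi ψ (pp k.1) c - toPhi ψ (pp k₀) c := by
  simp [polyDiff, toPhi]

/-- extraction of an independent family of rows realizing the rank -/
lemma exists_indep_rows (G' : SimpleGraph.Subgraph (⊤ : SimpleGraph V))
    (φ : V → EuclideanSpace ℝ (Fin d)) :
    ∃ (m : ℕ) (e : Fin m → V × V),
      m = Module.finrank ℝ (span ℝ (rigidityRow d φ '' G'.edgeSet)) ∧
      (∀ i, s((e i).1, (e i).2) ∈ G'.edgeSet) ∧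
      LinearIndependent ℝ (fun i => rigidityRow d φ s((e i).1, (e i).2)) := by
  obtain ⟨s, hsub, hspan, hind⟩ := exists_linearIndependent ℝ (rigidityRow d φ '' G'.edgeSet)
  have hfin : s.Finite := Set.finite_coe_iff.1 hind.finite
  haveI := hfin.fintype
  have hcard : Module.finrank ℝ (span ℝ (rigidityRow d φ '' G'.edgeSet))
      = Fintype.card ↥s := by
    rw [← hspan, finrank_span_set_eq_card hind, Set.toFinset_card]
  set m := Fintype.card ↥s with hm
  set eq := (Fintype.equivFin ↥s).symm with heq
  have hrep : ∀ x : ↥s, ∃ ab : V × V, s(ab.1, ab.2) ∈ G'.edgeSet ∧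
      rigidityRow d φ s(ab.1, ab.2) = ↑x := by
    intro x
    obtain ⟨e, he, hx⟩ := hsub x.2
    obtain ⟨ab, hab⟩ : ∃ ab : V × V, s(ab.1, ab.2) = e :=
      Sym2.inductionOn e fun a b => ⟨(a, b), rfl⟩
    exact ⟨ab, by rw [hab]; exact he, by rw [hab, hx]⟩
  choose rep hrep1 hrep2 using hrep
  refine ⟨m, fun i => rep (eq i), hcard.symm, fun i => hrep1 _, ?_⟩
  have hfam : (fun i => rigidityRow d φ s((rep (eq i)).1, (rep (eq i)).2))
      = (fun x : ↥s => (x : V × Fin d → ℝ)) ∘ eq := by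
    funext i
    simp [hrep2]
  rw [hfam]
  exact hind.comp eq eq.injective

/-- independence of the coordinate-difference family -/
lemma single_diff_indep (k₀ : Fin d) :
    LinearIndependent ℝ (fun k : {k : Fin d // k ≠ k₀} =>
      (Pi.single k.1 (1:ℝ) - Pi.single k₀ 1 : Fin d → ℝ)) := by
  rw [Fintype.linearIndependent_iff]
  intro g hg k
  have h0 := congrFun hg k.1
  simp only [Finset.sum_apply, Pi.smul_apply, Pi.sub_apply, Pi.single_apply,
    Pi.zero_apply, smul_eq_mul] at h0
  rw [Finset.sum_eq_single k] at h0
  · simpa [k.2, (k.2 : ¬ k.1 = k₀)] using h0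
  · intro k' _ hne
    have h1 : ¬ (k.1 = k'.1) := fun h => hne (Subtype.ext h.symm)
    have h2 : ¬ ((k : Fin d) = k₀) := k.2
    simp [h1, h2]
  · intro h
    exact absurd (Finset.mem_univ _) h

end Gluing


set_option maxHeartbeats 1600000 in
open Module Submodule Finset Gluing MvPolynomial in
/-- Gluing Lemma: if `G₁` and `G₂` (graphs with possibly different vertex sets, modelled
as subgraphs of a complete ambient graph) are both generically `d`-rigid and their
intersection has at least `d` vertices, then `G₁ ∪ G₂` is generically `d`-rigid. -/
theorem gluing_lemma {V : Type*} [Finite V] (d : ℕ) (hd : 1 ≤ d)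
    (G₁ G₂ : SimpleGraph.Subgraph (⊤ : SimpleGraph V))
    (h₁ : GenericallyRigid d G₁.coe) (h₂ : GenericallyRigid d G₂.coe)
    (hcap : d ≤ (G₁ ⊓ G₂).verts.ncard) :
    GenericallyRigid d (G₁ ⊔ G₂).coe := by
  classical
  cases nonempty_fintype V
  set C := (d + 1).choose 2 with hCdef
  set V₁ := G₁.verts with hV₁
  set V₂ := G₂.verts with hV₂
  set S12 : Set V := V₁ ∩ V₂ with hS12def
  obtain ⟨φ₁, hr₁⟩ := h₁
  obtain ⟨φ₂, hr₂⟩ := h₂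
  have hcap' : d ≤ S12.ncard := by
    rw [hS12def, ← SimpleGraph.Subgraph.verts_inf G₁ G₂]
    exact hcap
  -- extended configurations
  set φe₁ : V → EuclideanSpace ℝ (Fin d) := fun v => if h : v ∈ V₁ then φ₁ ⟨v, h⟩ else 0
    with hφe₁
  set φe₂ : V → EuclideanSpace ℝ (Fin d) := fun v => if h : v ∈ V₂ then φ₂ ⟨v, h⟩ else 0
    with hφe₂
  have hcomp₁ : φ₁ = φe₁ ∘ (↑) := by
    funext u
    simp only [hφe₁, Function.comp_apply, dif_pos u.2]
    rw [dif_pos (show (u : V) ∈ V₁ from u.2)]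
  have hcomp₂ : φ₂ = φe₂ ∘ (↑) := by
    funext u
    simp only [hφe₂, Function.comp_apply, dif_pos u.2]
    rw [dif_pos (show (u : V) ∈ V₂ from u.2)]
  have hrank₁ : Module.finrank ℝ (span ℝ (rigidityRow d φe₁ '' G₁.edgeSet))
      = d * V₁.ncard - C := by
    rw [← rank_transfer G₁ φe₁, ← hcomp₁, hr₁, Nat.card_coe_set_eq]
  have hrank₂ : Module.finrank ℝ (span ℝ (rigidityRow d φe₂ '' G₂.edgeSet))
      = d * V₂.ncard - C := by
    rw [← rank_transfer G₂ φe₂, ← hcomp₂, hr₂, Nat.card_coe_set_eq]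
  obtain ⟨m₁, e₁, hm₁, he₁, hind₁⟩ := exists_indep_rows G₁ φe₁
  obtain ⟨m₂, e₂, hm₂, he₂, hind₂⟩ := exists_indep_rows G₂ φe₂
  -- injection of Fin d into S12
  have hdcard : d ≤ Nat.card ↥S12 := by
    rw [Nat.card_coe_set_eq]; exact hcap'
  set k₀ : Fin d := ⟨0, hd⟩ with hk₀
  set pmap : Fin d → V :=
    fun k => ↑((Finite.equivFin ↥S12).symm (Fin.castLE hdcard k)) with hpmap
  have hpS : ∀ k, pmap k ∈ S12 := fun k => ((Finite.equivFin ↥S12).symm _).2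
  have hpinj : Function.Injective pmap := by
    intro k k' h
    have h1 := (Finite.equivFin ↥S12).symm.injective (Subtype.coe_injective h)
    exact Fin.ext (by have h2 := congrArg Fin.val h1; exact h2)
  -- the three polynomials
  set q₁ : MvPolynomial (V × Fin d) ℝ :=
    (Matrix.of fun i j => ∑ p : V × Fin d, polyRow (e₁ i) p * polyRow (e₁ j) p).det with hq₁def
  set q₂ : MvPolynomial (V × Fin d) ℝ :=
    (Matrix.of fun i j => ∑ p : V × Fin d, polyRow (e₂ i) p * polyRow (e₂ j) p).det with hq₂def
  set q₃ : MvPolynomial (V × Fin d) ℝ :=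
    (Matrix.of fun k l => ∑ c : Fin d, polyDiff pmap k₀ k c * polyDiff pmap k₀ l c).det
    with hq₃def
  -- row family equality under evaluation
  have hfam : ∀ (ψ : V × Fin d → ℝ) (m : ℕ) (e : Fin m → V × V),
      (fun i (p : V × Fin d) => MvPolynomial.eval ψ (polyRow (e i) p))
        = fun i => rigidityRow d (toPhi ψ) s((e i).1, (e i).2) := by
    intro ψ m e
    funext i p
    rw [eval_polyRow]
  have hfamd : ∀ (ψ : V × Fin d → ℝ),
      (fun (k : {k : Fin d // k ≠ k₀}) (c : Fin d) => MvPolynomial.eval ψ (polyDiff pmap k₀ k c))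
        = fun k => (fun c => toPhi ψ (pmap k.1) c - toPhi ψ (pmap k₀) c : Fin d → ℝ) := by
    intro ψ
    funext k c
    rw [eval_polyDiff]
  -- nonvanishing of q₁
  have hq₁ : q₁ ≠ 0 := by
    intro h0
    set ψ₁ : V × Fin d → ℝ := fun p => φe₁ p.1 p.2 with hψ₁
    have htp : toPhi ψ₁ = φe₁ := rfl
    have hev : MvPolynomial.eval ψ₁ q₁ ≠ 0 := by
      rw [hq₁def, eval_gram_det (fun i => polyRow (e₁ i)) ψ₁, hfam ψ₁ m₁ e₁, htp]
      exact hind₁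
    exact hev (by rw [h0, map_zero])
  have hq₂ : q₂ ≠ 0 := by
    intro h0
    set ψ₂ : V × Fin d → ℝ := fun p => φe₂ p.1 p.2 with hψ₂
    have htp : toPhi ψ₂ = φe₂ := rfl
    have hev : MvPolynomial.eval ψ₂ q₂ ≠ 0 := by
      rw [hq₂def, eval_gram_det (fun i => polyRow (e₂ i)) ψ₂, hfam ψ₂ m₂ e₂, htp]
      exact hind₂
    exact hev (by rw [h0, map_zero])
  have hq₃ : q₃ ≠ 0 := by
    intro h0
    set φ₀ : V → (Fin d → ℝ) :=
      Function.extend pmap (fun k => (Pi.single k 1 : Fin d → ℝ)) (fun _ => 0) with hφ₀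
    set ψ₀ : V × Fin d → ℝ := fun p => φ₀ p.1 p.2 with hψ₀
    have hext : ∀ (k : Fin d) (c : Fin d),
        toPhi ψ₀ (pmap k) c = (Pi.single k (1:ℝ) : Fin d → ℝ) c := by
      intro k c
      show φ₀ (pmap k) c = _
      rw [hφ₀, hpinj.extend_apply]
    have hev : MvPolynomial.eval ψ₀ q₃ ≠ 0 := by
      rw [hq₃def, eval_gram_det (polyDiff pmap k₀) ψ₀, hfamd ψ₀]
      have hfm : (fun (k : {k : Fin d // k ≠ k₀}) =>
          (fun c => toPhi ψ₀ (pmap k.1) c - toPhi ψ₀ (pmap k₀) c : Fin d → ℝ))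
          = fun k => (Pi.single k.1 (1:ℝ) - Pi.single k₀ 1 : Fin d → ℝ) := by
        funext k
        funext c
        rw [hext k.1 c, hext k₀ c, Pi.sub_apply]
      rw [hfm]
      exact single_diff_indep k₀
    exact hev (by rw [h0, map_zero])
  -- a common generic evaluation point
  have hexists : ∃ ψ : V × Fin d → ℝ, MvPolynomial.eval ψ (q₁ * q₂ * q₃) ≠ 0 := by
    by_contra hcon
    push_neg at hcon
    have h0 : q₁ * q₂ * q₃ = 0 :=
      MvPolynomial.funext (fun x => by rw [hcon x, map_zero])
    exact (mul_ne_zero (mul_ne_zero hq₁ hq₂) hq₃) h0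
  obtain ⟨ψ, hψ⟩ := hexists
  rw [map_mul, map_mul] at hψ
  have hψ₁ : MvPolynomial.eval ψ q₁ ≠ 0 := fun h => hψ (by rw [h, zero_mul, zero_mul])
  have hψ₂ : MvPolynomial.eval ψ q₂ ≠ 0 := fun h => hψ (by rw [h, mul_zero, zero_mul])
  have hψ₃ : MvPolynomial.eval ψ q₃ ≠ 0 := fun h => hψ (by rw [h, mul_zero])
  set φ := toPhi ψ with hφdef
  -- independent rows at the generic φ
  have hrows₁ : LinearIndependent ℝ (fun i => rigidityRow d φ s((e₁ i).1, (e₁ i).2)) := by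
    have := (eval_gram_det (fun i => polyRow (e₁ i)) ψ).1 hψ₁
    rwa [hfam ψ m₁ e₁] at this
  have hrows₂ : LinearIndependent ℝ (fun i => rigidityRow d φ s((e₂ i).1, (e₂ i).2)) := by
    have := (eval_gram_det (fun i => polyRow (e₂ i)) ψ).1 hψ₂
    rwa [hfam ψ m₂ e₂] at this
  have hdiff : LinearIndependent ℝ (fun k : {k : Fin d // k ≠ k₀} =>
      (fun c => φ (pmap k.1) c - φ (pmap k₀) c : Fin d → ℝ)) := by
    have := (eval_gram_det (polyDiff pmap k₀) ψ).1 hψ₃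
    rwa [hfamd ψ] at this
  -- motion independence
  have hmot12 : LinearIndependent ℝ (fun i : MI d => resL S12 d (MotF φ i)) :=
    motF_indep φ S12 pmap hpS k₀ hdiff
  have hsub1 : S12 ⊆ V₁ ∪ V₂ := Set.inter_subset_left.trans Set.subset_union_left
  have hmotU : LinearIndependent ℝ (fun i : MI d => resL (V₁ ∪ V₂) d (MotF φ i)) := by
    set g : ↥S12 × Fin d → ↥(V₁ ∪ V₂) × Fin d :=
      fun q => (⟨↑q.1, hsub1 q.1.2⟩, q.2) with hg
    apply LinearIndependent.of_comp (LinearMap.funLeft ℝ ℝ g)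
    have hcompeq : (⇑(LinearMap.funLeft ℝ ℝ g) ∘ fun i : MI d => resL (V₁ ∪ V₂) d (MotF φ i))
        = fun i : MI d => resL S12 d (MotF φ i) := by
      funext i
      rfl
    rw [hcompeq]
    exact hmot12
  -- the two row spaces
  set A := span ℝ (rigidityRow d φ '' G₁.edgeSet) with hAdef
  set B := span ℝ (rigidityRow d φ '' G₂.edgeSet) with hBdef
  have hA_le : A ≤ suppSub V₁ d ⊓ perpSub φ := by
    rw [hAdef, Submodule.span_le]
    rintro x ⟨e, he, rfl⟩
    exact Submodule.mem_inf.2 ⟨row_mem_suppSub G₁ φ he, row_mem_perpSub φ e⟩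
  have hB_le : B ≤ suppSub V₂ d ⊓ perpSub φ := by
    rw [hBdef, Submodule.span_le]
    rintro x ⟨e, he, rfl⟩
    exact Submodule.mem_inf.2 ⟨row_mem_suppSub G₂ φ he, row_mem_perpSub φ e⟩
  have hInf_le : A ⊓ B ≤ suppSub S12 d ⊓ perpSub φ := by
    intro x hx
    obtain ⟨hxA, hxB⟩ := Submodule.mem_inf.1 hx
    obtain ⟨hs1, hp1⟩ := Submodule.mem_inf.1 (hA_le hxA)
    obtain ⟨hs2, _⟩ := Submodule.mem_inf.1 (hB_le hxB)
    refine Submodule.mem_inf.2 ⟨?_, hp1⟩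
    intro p hp
    by_cases hp1' : p.1 ∈ V₁
    · exact hs2 p (fun hin2 => hp ⟨hp1', hin2⟩)
    · exact hs1 p hp1'
  have hSup_le : A ⊔ B ≤ suppSub (V₁ ∪ V₂) d ⊓ perpSub φ := by
    apply sup_le
    · intro x hx
      obtain ⟨hs, hperp⟩ := Submodule.mem_inf.1 (hA_le hx)
      exact Submodule.mem_inf.2
        ⟨fun p hp => hs p (fun h => hp (Set.mem_union_left _ h)), hperp⟩
    · intro x hx
      obtain ⟨hs, hperp⟩ := Submodule.mem_inf.1 (hB_le hx)
      exact Submodule.mem_inf.2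
        ⟨fun p hp => hs p (fun h => hp (Set.mem_union_right _ h)), hperp⟩
  -- dimension bounds
  have hfInf : Module.finrank ℝ ↥(A ⊓ B) ≤ d * S12.ncard - C :=
    finrank_le_of_supp_perp φ S12 (A ⊓ B) hInf_le hmot12
  have hfSup : Module.finrank ℝ ↥(A ⊔ B) ≤ d * (V₁ ∪ V₂).ncard - C :=
    finrank_le_of_supp_perp φ (V₁ ∪ V₂) (A ⊔ B) hSup_le hmotU
  have hfA : d * V₁.ncard - C ≤ Module.finrank ℝ ↥A := by
    have hle : span ℝ (Set.range (fun i => rigidityRow d φ s((e₁ i).1, (e₁ i).2))) ≤ A := by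
      rw [Submodule.span_le]
      rintro _ ⟨i, rfl⟩
      exact Submodule.subset_span ⟨_, he₁ i, rfl⟩
    have hmono := Submodule.finrank_mono hle
    rw [finrank_span_eq_card hrows₁, Fintype.card_fin] at hmono
    rw [hrank₁] at hm₁
    omega
  have hfB : d * V₂.ncard - C ≤ Module.finrank ℝ ↥B := by
    have hle : span ℝ (Set.range (fun i => rigidityRow d φ s((e₂ i).1, (e₂ i).2))) ≤ B := by
      rw [Submodule.span_le]
      rintro _ ⟨i, rfl⟩
      exact Submodule.subset_span ⟨_, he₂ i, rfl⟩
    have hmono := Submodule.finrank_mono hle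
    rw [finrank_span_eq_card hrows₂, Fintype.card_fin] at hmono
    rw [hrank₂] at hm₂
    omega
  have hkey := Submodule.finrank_sup_add_finrank_inf_eq A B
  -- arithmetic facts
  have hCd : C ≤ d * d := by
    rw [hCdef, Nat.choose_two_right]
    simp only [Nat.add_sub_cancel]
    have h1 : (d + 1) * d ≤ 2 * (d * d) := by nlinarith
    calc (d + 1) * d / 2 ≤ 2 * (d * d) / 2 := Nat.div_le_div_right h1
      _ = d * d := by omega
  have hC12 : C ≤ d * S12.ncard := hCd.trans (Nat.mul_le_mul_left d hcap')
  have hn12_1 : d * S12.ncard ≤ d * V₁.ncard :=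
    Nat.mul_le_mul_left d (Set.ncard_le_ncard Set.inter_subset_left (Set.toFinite V₁))
  have hn12_2 : d * S12.ncard ≤ d * V₂.ncard :=
    Nat.mul_le_mul_left d (Set.ncard_le_ncard Set.inter_subset_right (Set.toFinite V₂))
  have hcount : (V₁ ∪ V₂).ncard + S12.ncard = V₁.ncard + V₂.ncard := by
    rw [hS12def]
    exact Set.ncard_union_add_ncard_inter V₁ V₂ (Set.toFinite V₁) (Set.toFinite V₂)
  have hcountd : d * (V₁ ∪ V₂).ncard + d * S12.ncard = d * V₁.ncard + d * V₂.ncard := by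
    rw [← Nat.left_distrib, ← Nat.left_distrib, hcount]
  -- conclusion
  refine ⟨φ ∘ (↑), ?_⟩
  rw [rank_transfer (G₁ ⊔ G₂) φ]
  have hedge : (G₁ ⊔ G₂).edgeSet = G₁.edgeSet ∪ G₂.edgeSet :=
    SimpleGraph.Subgraph.edgeSet_sup
  rw [hedge, Set.image_union, Submodule.span_union, ← hAdef, ← hBdef]
  have hnu : Nat.card ↥(G₁ ⊔ G₂).verts = (V₁ ∪ V₂).ncard := by
    rw [Nat.card_coe_set_eq, SimpleGraph.Subgraph.verts_sup]
  rw [hnu]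
  omega
end
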